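/- (Lower bound on sparse graphs via clique-cycle construction) For any integer 2 ≤ d ≤ (log n)/e, consider the d-regular graph G formed by arranging n/(d−1) disjoint cliques of size d−1 in a cycle and joining consecutive cliques by d−1 vertex-disjoint edges. If some clique S (|S| = d−1) receives Φ_S ≥ C·log n / log((log n)/(d−1)) balls as birthplaces, then the maximum load β satisfies β·|B_S^β| ≥ Φ_S, and since |B_S^β| ≤ (2β+1)·d, it follows that β = Ω( sqrt( log n / ( d·log((log n)/d) ) ) ). -/

import Mathlib

open Finset

/-- The `d`-regular "clique cycle": `k` disjoint cliques of size `c` arranged in a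
cycle, with consecutive cliques joined by `c` vertex-disjoint edges (here the edge
joining equal `Fin c`-coordinates).  With `c = d − 1` this graph is `d`-regular. -/
def cliqueCycle (k c : ℕ) : SimpleGraph (ZMod k × Fin c) where
  Adj p q := p ≠ q ∧
    (p.1 = q.1 ∨ ((q.1 = p.1 + 1 ∨ p.1 = q.1 + 1) ∧ p.2 = q.2))
  symm := by
    constructor
    rintro p q ⟨hne, h⟩
    refine ⟨hne.symm, ?_⟩
    rcases h with h | ⟨h, h2⟩
    · exact Or.inl h.symm
    · exact Or.inr ⟨h.symm, h2.symm⟩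
  loopless := ⟨fun p h => h.1 rfl⟩

lemma cliqueCycle_walk_coord {k c : ℕ} {p q : ZMod k × Fin c}
    (w : (cliqueCycle k c).Walk p q) :
    ∃ j : ℤ, j.natAbs ≤ w.length ∧ q.1 = p.1 + (j : ZMod k) := by
  induction w with
  | nil => exact ⟨0, by simp⟩
  | @cons a r b h w ih =>
    obtain ⟨j, hj, hq⟩ := ih
    rcases h.2 with h1 | ⟨h1 | h1, _⟩
    · exact ⟨j, by simp [SimpleGraph.Walk.length_cons]; omega, by rw [hq, h1]⟩
    · refine ⟨j + 1, ?_, ?_⟩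
      · simp only [SimpleGraph.Walk.length_cons]; omega
      · rw [hq, h1]; push_cast; ring
    · refine ⟨j - 1, ?_, ?_⟩
      · simp only [SimpleGraph.Walk.length_cons]; omega
      · have : r.1 = a.1 + (-1 : ℤ) := by
          rw [h1]; push_cast; ring
        rw [hq, this]; push_cast; ring

lemma cliqueCycle_reachable {k c : ℕ} (hk : 0 < k) (p q : ZMod k × Fin c) :
    (cliqueCycle k c).Reachable p q := by
  haveI : NeZero k := ⟨hk.ne'⟩
  have step : ∀ (m : ℕ) (i : ZMod k) (x : Fin c),
      (cliqueCycle k c).Reachable (i, x) (i + (m : ZMod k), x) := by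
    intro m
    induction m with
    | zero => intro i x; simpa using SimpleGraph.Reachable.refl (i, x)
    | succ m ih =>
      intro i x
      refine (ih i x).trans ?_
      by_cases he : (i + (m : ZMod k), x) = (i + ((m + 1 : ℕ) : ZMod k), x)
      · rw [he]
      · refine SimpleGraph.Adj.reachable ⟨he, Or.inr ⟨Or.inl ?_, rfl⟩⟩
        push_cast; ring
  have h1 : (cliqueCycle k c).Reachable p (p.1, q.2) := by
    by_cases he : p = (p.1, q.2)
    · rw [← he]
    · exact SimpleGraph.Adj.reachable ⟨he, Or.inl rfl⟩
  have h2 : (cliqueCycle k c).Reachable (p.1, q.2) q := by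
    have := step (q.1 - p.1).val p.1 q.2
    rwa [ZMod.natCast_val, ZMod.cast_id, add_sub_cancel] at this
  exact h1.trans h2

/-- **Lower bound on sparse graphs via the clique-cycle construction.**
For `2 ≤ d ≤ (log n)/e`, consider the `d`-regular clique cycle on `n = k(d−1)`
vertices.  Suppose `n` balls are allocated so that every ball is placed within graph
distance `β` of its birthplace and every vertex holds at most `β` balls (`β` is the
maximum load).  If the clique `S` with cycle coordinate `i₀` receives at least
`Φ_S = C·log n / log(log n/(d−1))` balls as birthplaces, then
`Φ_S ≤ β·|B_S^β| ≤ β·(2β+1)·d`. -/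
theorem clique_cycle_lower_bound (d k n : ℕ) (hd : 2 ≤ d)
    (hdlog : (d : ℝ) ≤ Real.log n / Real.exp 1)
    (hn : n = k * (d - 1))
    (C : ℝ) (hC : 0 < C)
    (birth place : Fin n → ZMod k × Fin (d - 1)) (β : ℕ)
    (hdist : ∀ i, (cliqueCycle k (d - 1)).dist (birth i) (place i) ≤ β)
    (hload : ∀ v, (univ.filter (fun i => place i = v)).card ≤ β)
    (i₀ : ZMod k)
    (hheavy : C * Real.log n / Real.log (Real.log n / (d - 1 : ℝ)) ≤
      ((univ.filter (fun i => (birth i).1 = i₀)).card : ℝ)) :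
    C * Real.log n / Real.log (Real.log n / (d - 1 : ℝ)) ≤
      (β : ℝ) * ((2 * β + 1) * d) := by
  classical
  set T : Finset (Fin n) := univ.filter (fun i => (birth i).1 = i₀) with hT
  set B : Finset (ZMod k × Fin (d - 1)) :=
    ((Finset.Icc (-(β : ℤ)) (β : ℤ)).image fun j : ℤ => (i₀ + (j : ZMod k))) ×ˢ univ with hB
  have hmem : ∀ i ∈ T, place i ∈ B := by
    intro i hi
    have hbirth : (birth i).1 = i₀ := by
      simpa [hT] using hi
    have hk : 0 < k := by
      have hn0 : 0 < n := Fin.pos i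
      rcases Nat.eq_zero_or_pos k with h | h
      · simp [h] at hn; omega
      · exact h
    have hreach := cliqueCycle_reachable hk (birth i) (place i)
    obtain ⟨w, hw⟩ := hreach.exists_walk_length_eq_dist
    obtain ⟨j, hj, hq⟩ := cliqueCycle_walk_coord w
    have hjβ : j.natAbs ≤ β := by
      have := hdist i
      omega
    rw [hB]
    refine Finset.mem_product.2 ⟨?_, Finset.mem_univ _⟩
    refine Finset.mem_image.2 ⟨j, ?_, ?_⟩
    · rw [Finset.mem_Icc]; omega
    · rw [← hbirth, ← hq]
  have hcount : T.card ≤ B.card * β := by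
    rw [Finset.card_eq_sum_card_fiberwise hmem]
    calc ∑ v ∈ B, (T.filter fun i => place i = v).card
        ≤ ∑ v ∈ B, β := by
          refine Finset.sum_le_sum fun v _ => ?_
          exact le_trans (Finset.card_le_card (by
            intro x hx
            simp only [Finset.mem_filter] at hx ⊢
            exact ⟨Finset.mem_univ _, hx.2⟩)) (hload v)
      _ = B.card * β := by rw [Finset.sum_const, smul_eq_mul]
  have hBcard : B.card ≤ (2 * β + 1) * (d - 1) := by
    rw [hB, Finset.card_product, Finset.card_univ, Fintype.card_fin]
    have : ((Finset.Icc (-(β : ℤ)) (β : ℤ)).image fun j : ℤ => (i₀ + (j : ZMod k))).card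
        ≤ (Finset.Icc (-(β : ℤ)) (β : ℤ)).card := Finset.card_image_le
    have hIcc : (Finset.Icc (-(β : ℤ)) (β : ℤ)).card = 2 * β + 1 := by
      rw [Int.card_Icc]; omega
    exact Nat.mul_le_mul_right _ (by omega)
  have hfinal : T.card ≤ β * ((2 * β + 1) * d) := by
    calc T.card ≤ B.card * β := hcount
      _ ≤ ((2 * β + 1) * (d - 1)) * β := Nat.mul_le_mul_right _ hBcard
      _ ≤ ((2 * β + 1) * d) * β := by
          exact Nat.mul_le_mul_right _ (Nat.mul_le_mul_left _ (by omega))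
      _ = β * ((2 * β + 1) * d) := Nat.mul_comm _ _
  refine hheavy.trans ?_
  have := (Nat.cast_le (α := ℝ)).2 hfinal
  push_cast at this ⊢
  linarith
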